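/- Perturbation along the Lasso solution path (active-set line lemma): Suppose θ̂ satisfies the Lasso KKT conditions at penalty λ₀ > 0 with active set S = {i : θ̂_i ≠ 0}, and suppose |G_i(θ̂)| < λ₀ strictly for all i ∉ S, where G_i(θ) = (1/n)⟨y - Xθ, X_i⟩. Let Γ̂_S = (1/n)X_SᵀX_S be invertible, q_S = (sign(θ̂_i))_{i∈S}, and define θ' by θ'_S = -Γ̂_S^{-1}q_S and θ'_i = 0 for i ∉ S. Then there exists δ₀ > 0 such that for all |δ| < δ₀, the point θ̂ + δθ' satisfies the Lasso KKT conditions at penalty λ₀ + δ, and in particular is a Lasso solution for penalty λ₀ + δ. -/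
import Mathlib


open Matrix Finset

lemma ptwise (lam a b g : ℝ) (hlam : 0 ≤ lam)
    (h1 : a ≠ 0 → g = Real.sign a * lam) (h2 : a = 0 → |g| ≤ lam) :
    g * (b - a) ≤ lam * (|b| - |a|) := by
  by_cases ha : a = 0
  · subst ha
    simp only [abs_zero, sub_zero]
    have := h2 rfl
    calc g * b ≤ |g * b| := le_abs_self _
      _ = |g| * |b| := abs_mul _ _
      _ ≤ lam * |b| := mul_le_mul_of_nonneg_right this (abs_nonneg _)
  · have hg := h1 ha
    rcases lt_trichotomy a 0 with h | h | h
    · rw [Real.sign_of_neg h] at hg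
      rw [abs_of_neg h]
      nlinarith [neg_abs_le b, le_abs_self b]
    · exact absurd h ha
    · rw [Real.sign_of_pos h] at hg
      rw [abs_of_pos h]
      nlinarith [neg_abs_le b, le_abs_self b]

lemma sign_add_of_abs_lt {a e : ℝ} (h : |e| < |a|) :
    Real.sign (a + e) = Real.sign a ∧ a + e ≠ 0 := by
  rcases lt_trichotomy a 0 with ha | ha | ha
  · rw [abs_of_neg ha] at h
    have : a + e < 0 := by nlinarith [le_abs_self e]
    rw [Real.sign_of_neg this, Real.sign_of_neg ha]
    exact ⟨rfl, ne_of_lt this⟩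
  · subst ha; simp at h; exact absurd h (not_lt.mpr (abs_nonneg e))
  · rw [abs_of_pos ha] at h
    have : 0 < a + e := by nlinarith [neg_abs_le e]
    rw [Real.sign_of_pos this, Real.sign_of_pos ha]
    exact ⟨rfl, (ne_of_lt this).symm⟩

lemma kkt_optimal {n d : ℕ} (hn : 0 < n) (X : Matrix (Fin n) (Fin d) ℝ) (y : Fin n → ℝ)
    (lam : ℝ) (hlam : 0 ≤ lam) (θs : Fin d → ℝ)
    (h1 : ∀ i, θs i ≠ 0 →
      (1/(n:ℝ)) * ((y - X.mulVec θs) ⬝ᵥ fun k => X k i) = Real.sign (θs i) * lam)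
    (h2 : ∀ i, θs i = 0 →
      |(1/(n:ℝ)) * ((y - X.mulVec θs) ⬝ᵥ fun k => X k i)| ≤ lam)
    (θ : Fin d → ℝ) :
    (1/(2*(n:ℝ))) * ∑ k, (y k - X.mulVec θs k)^2 + lam * ∑ i, |θs i|
      ≤ (1/(2*(n:ℝ))) * ∑ k, (y k - X.mulVec θ k)^2 + lam * ∑ i, |θ i| := by
  set g : Fin d → ℝ := fun i => (1/(n:ℝ)) * ((y - X.mulVec θs) ⬝ᵥ fun k => X k i) with hg
  set r : Fin n → ℝ := fun k => y k - X.mulVec θs k with hr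
  set u : Fin d → ℝ := fun j => θ j - θs j with hu
  have hnpos : (0:ℝ) < (n:ℝ) := by exact_mod_cast hn
  have hmv : ∀ k, X.mulVec θ k = X.mulVec θs k + X.mulVec u k := by
    intro k
    have : X.mulVec u = X.mulVec θ - X.mulVec θs := by
      have : u = θ - θs := rfl
      rw [this, Matrix.mulVec_sub]
    rw [this]; simp
  have expand : ∑ k, (y k - X.mulVec θ k)^2
      = ∑ k, (r k)^2 - 2 * ∑ k, r k * X.mulVec u k + ∑ k, (X.mulVec u k)^2 := by
    have h : ∀ k ∈ (univ : Finset (Fin n)), (y k - X.mulVec θ k)^2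
        = (r k)^2 - 2 * (r k * X.mulVec u k) + (X.mulVec u k)^2 := by
      intro k _
      rw [hmv k]
      simp only [hr]
      ring
    rw [Finset.sum_congr rfl h]
    rw [Finset.sum_add_distrib, Finset.sum_sub_distrib, Finset.mul_sum]
  have fubini : ∑ k, r k * X.mulVec u k
      = ∑ j, u j * ((fun k => r k) ⬝ᵥ fun k => X k j) := by
    simp only [Matrix.mulVec, dotProduct, Finset.mul_sum]
    rw [Finset.sum_comm]
    apply Finset.sum_congr rfl
    intro j _
    apply Finset.sum_congr rfl
    intro k _
    ring
  have hgdot : ∀ j, g j = (1/(n:ℝ)) * ((fun k => r k) ⬝ᵥ fun k => X k j) := by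
    intro j
    simp only [hg, dotProduct, hr, Pi.sub_apply]
  have hsum : ∑ j, g j * u j ≤ lam * ∑ i, |θ i| - lam * ∑ i, |θs i| := by
    have : ∀ j ∈ (univ : Finset (Fin d)), g j * u j ≤ lam * (|θ j| - |θs j|) := by
      intro j _
      exact ptwise lam (θs j) (θ j) (g j) hlam (h1 j) (h2 j)
    calc ∑ j, g j * u j ≤ ∑ j, lam * (|θ j| - |θs j|) := Finset.sum_le_sum this
      _ = lam * ∑ i, |θ i| - lam * ∑ i, |θs i| := by
          rw [← Finset.mul_sum, Finset.sum_sub_distrib]; ring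
  have hB : (1/(n:ℝ)) * ∑ k, r k * X.mulVec u k = ∑ j, g j * u j := by
    rw [fubini, Finset.mul_sum]
    apply Finset.sum_congr rfl
    intro j _
    rw [hgdot j]; ring
  have hC : 0 ≤ ∑ k, (X.mulVec u k)^2 := Finset.sum_nonneg fun k _ => sq_nonneg _
  have hrsum : ∑ k, (y k - X.mulVec θs k)^2 = ∑ k, (r k)^2 := rfl
  rw [expand, hrsum]
  have e : 1/(2*(n:ℝ)) * (∑ k, (r k)^2 - 2 * ∑ k, r k * X.mulVec u k + ∑ k, (X.mulVec u k)^2)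
      = 1/(2*(n:ℝ)) * ∑ k, (r k)^2 - (1/(n:ℝ)) * ∑ k, r k * X.mulVec u k
        + 1/(2*(n:ℝ)) * ∑ k, (X.mulVec u k)^2 := by ring
  rw [e]
  have hB' : (1/(n:ℝ)) * ∑ k, r k * X.mulVec u k
      ≤ lam * ∑ i, |θ i| - lam * ∑ i, |θs i| := by rw [hB]; exact hsum
  have hC' : 0 ≤ 1/(2*(n:ℝ)) * ∑ k, (X.mulVec u k)^2 := by positivity
  linarith

/-- Active-set line lemma: perturbing a Lasso solution along the direction
`θ'_S = -Γ̂_S⁻¹ q_S` (zero off the active set) yields Lasso solutions for nearby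
penalties `λ₀ + δ`. -/
theorem stmt6 {n d : ℕ} (hn : 0 < n) (X : Matrix (Fin n) (Fin d) ℝ) (y : Fin n → ℝ)
    (lam0 : ℝ) (hlam0 : 0 < lam0) (θhat θ' : Fin d → ℝ)
    (G : (Fin d → ℝ) → Fin d → ℝ)
    (hG : ∀ θ i, G θ i = (1/(n:ℝ)) * ((y - X.mulVec θ) ⬝ᵥ fun k => X k i))
    (hkkt1 : ∀ i, θhat i ≠ 0 → G θhat i = Real.sign (θhat i) * lam0)
    (hkkt2 : ∀ i, θhat i = 0 → |G θhat i| < lam0)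
    (hθ'0 : ∀ i, θhat i = 0 → θ' i = 0)
    (hθ'eq : ∀ i, θhat i ≠ 0 →
      ∑ j, ((1/(n:ℝ)) * ((fun k => X k i) ⬝ᵥ fun k => X k j)) * θ' j
        = - Real.sign (θhat i)) :
    ∃ δ₀ > (0:ℝ), ∀ δ : ℝ, |δ| < δ₀ →
      ((∀ i, ((θhat + δ • θ') i ≠ 0 →
          G (θhat + δ • θ') i = Real.sign ((θhat + δ • θ') i) * (lam0 + δ))
        ∧ ((θhat + δ • θ') i = 0 → |G (θhat + δ • θ') i| ≤ lam0 + δ))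
      ∧ (∀ θ, (1/(2*n)) * ∑ k, (y k - X.mulVec (θhat + δ • θ') k)^2
            + (lam0 + δ) * ∑ i, |(θhat + δ • θ') i|
          ≤ (1/(2*n)) * ∑ k, (y k - X.mulVec θ k)^2 + (lam0 + δ) * ∑ i, |θ i|)) := by
  -- the correlation shift vector
  set c : Fin d → ℝ :=
    fun i => ∑ j, ((1/(n:ℝ)) * ((fun k => X k i) ⬝ᵥ fun k => X k j)) * θ' j with hc
  -- G shifts linearly along θ'
  have hGshift : ∀ (δ : ℝ) (i : Fin d), G (θhat + δ • θ') i = G θhat i - δ * c i := by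
    intro δ i
    rw [hG, hG]
    have hmv : X.mulVec (θhat + δ • θ') = X.mulVec θhat + δ • X.mulVec θ' := by
      rw [Matrix.mulVec_add, Matrix.mulVec_smul]
    rw [hmv]
    have hdot : (y - (X.mulVec θhat + δ • X.mulVec θ')) ⬝ᵥ (fun k => X k i)
        = (y - X.mulVec θhat) ⬝ᵥ (fun k => X k i)
          - δ * (X.mulVec θ' ⬝ᵥ fun k => X k i) := by
      simp only [dotProduct, Pi.sub_apply, Pi.add_apply, Pi.smul_apply, smul_eq_mul,
        Finset.mul_sum]
      rw [← Finset.sum_sub_distrib]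
      apply Finset.sum_congr rfl
      intro k _
      ring
    rw [hdot]
    have hci : c i = (1/(n:ℝ)) * (X.mulVec θ' ⬝ᵥ fun k => X k i) := by
      simp only [hc, Matrix.mulVec, dotProduct, Finset.mul_sum, Finset.sum_mul]
      rw [Finset.sum_comm]
      apply Finset.sum_congr rfl
      intro j _
      apply Finset.sum_congr rfl
      intro k _
      ring
    rw [hci]
    ring
  -- choose δ₀
  set F : Fin d → ℝ := fun i =>
    if θhat i = 0 then (lam0 - |G θhat i|) / (|c i| + 1)
    else |θhat i| / (|θ' i| + 1) with hF
  set s : Finset ℝ := insert lam0 (Finset.image F Finset.univ) with hs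
  have hsne : s.Nonempty := ⟨lam0, Finset.mem_insert_self _ _⟩
  refine ⟨s.min' hsne, ?_, ?_⟩
  · show (0:ℝ) < s.min' hsne
    rw [Finset.lt_min'_iff]
    intro b hb
    rw [hs, Finset.mem_insert] at hb
    rcases hb with rfl | hb
    · exact hlam0
    · obtain ⟨i, _, rfl⟩ := Finset.mem_image.mp hb
      by_cases hi : θhat i = 0
      · have : F i = (lam0 - |G θhat i|) / (|c i| + 1) := by
          simp only [hF]; rw [if_pos hi]
        rw [this]
        apply div_pos
        · linarith [hkkt2 i hi]
        · positivity
      · have : F i = |θhat i| / (|θ' i| + 1) := by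
          simp only [hF]; rw [if_neg hi]
        rw [this]
        apply div_pos
        · exact abs_pos.mpr hi
        · positivity
  · intro δ hδ
    have hδlam : |δ| < lam0 := lt_of_lt_of_le hδ (Finset.min'_le _ _ (Finset.mem_insert_self _ _))
    have hδF : ∀ i, |δ| < F i := fun i =>
      lt_of_lt_of_le hδ (Finset.min'_le _ _
        (Finset.mem_insert_of_mem (Finset.mem_image_of_mem F (Finset.mem_univ i))))
    have hlamδ : 0 ≤ lam0 + δ := by
      have := neg_abs_le δ; linarith
    have happ : ∀ i, (θhat + δ • θ') i = θhat i + δ * θ' i := by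
      intro i; simp
    -- the KKT conditions at the perturbed point
    have hkkt : ∀ i, ((θhat + δ • θ') i ≠ 0 →
          G (θhat + δ • θ') i = Real.sign ((θhat + δ • θ') i) * (lam0 + δ))
        ∧ ((θhat + δ • θ') i = 0 → |G (θhat + δ • θ') i| ≤ lam0 + δ) := by
      intro i
      by_cases hi : θhat i = 0
      · -- inactive coordinate: stays zero
        have hz : (θhat + δ • θ') i = 0 := by
          rw [happ, hi, hθ'0 i hi]; ring
        constructor
        · intro h; exact absurd hz h
        · intro _
          rw [hGshift]
          have hFi : F i = (lam0 - |G θhat i|) / (|c i| + 1) := by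
            simp only [hF]; rw [if_pos hi]
          have hden : (0:ℝ) < |c i| + 1 := by positivity
          have h1 : |δ| * (|c i| + 1) < lam0 - |G θhat i| := by
            have := hδF i
            rw [hFi] at this
            calc |δ| * (|c i| + 1) < ((lam0 - |G θhat i|) / (|c i| + 1)) * (|c i| + 1) :=
                  mul_lt_mul_of_pos_right this hden
              _ = lam0 - |G θhat i| := div_mul_cancel₀ _ (ne_of_gt hden)
          calc |G θhat i - δ * c i| ≤ |G θhat i| + |δ * c i| := abs_sub _ _
            _ = |G θhat i| + |δ| * |c i| := by rw [abs_mul]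
            _ ≤ lam0 + δ := by
                have := neg_abs_le δ
                nlinarith [abs_nonneg δ]
      · -- active coordinate: sign preserved
        have hne : |δ * θ' i| < |θhat i| := by
          have hFi : F i = |θhat i| / (|θ' i| + 1) := by
            simp only [hF]; rw [if_neg hi]
          have hden : (0:ℝ) < |θ' i| + 1 := by positivity
          have h1 : |δ| * (|θ' i| + 1) < |θhat i| := by
            have := hδF i
            rw [hFi] at this
            calc |δ| * (|θ' i| + 1) < (|θhat i| / (|θ' i| + 1)) * (|θ' i| + 1) :=
                  mul_lt_mul_of_pos_right this hden
              _ = |θhat i| := div_mul_cancel₀ _ (ne_of_gt hden)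
          rw [abs_mul]
          nlinarith [abs_nonneg δ]
        obtain ⟨hsgn, hnz⟩ := sign_add_of_abs_lt hne
        have hnz' : (θhat + δ • θ') i ≠ 0 := by rw [happ]; exact hnz
        constructor
        · intro _
          rw [hGshift, happ, hsgn, hkkt1 i hi]
          have hce : c i = - Real.sign (θhat i) := hθ'eq i hi
          rw [hce]
          ring
        · intro h; exact absurd h hnz'
    refine ⟨hkkt, ?_⟩
    intro θ
    have := kkt_optimal hn X y (lam0 + δ) hlamδ (θhat + δ • θ')
      (fun i hi => by rw [← hG]; exact (hkkt i).1 hi)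
      (fun i hi => by rw [← hG]; exact (hkkt i).2 hi) θ
    exact this
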